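/- Let k > 0, H*_ε = [[0,1],[-1,-2]], and let P ≻ 0 solve H*_εᵀP + P H*_ε = -2I. Let ε : [0,∞) → ℝ² solve ε̇ = k H*_ε ε + w(t) with ‖w(t)‖ ≤ W̄ for all t. Then ‖ε(t)‖ ≤ (λ_max(P)/λ_min(P)) e^{-(k/λ_max(P)) t} ‖ε(0)‖ + (1/k)(λ_max(P)/λ_min(P))² W̄. -/

import Mathlib

set_option maxHeartbeats 4000000
open Matrix

lemma iSup_fin2 (f : Fin 2 → ℝ) : (⨆ i, f i) = max (f 0) (f 1) := by
  apply le_antisymm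
  · exact ciSup_le (fun i => by fin_cases i <;> simp [le_max_left, le_max_right])
  · exact max_le (le_ciSup (Set.finite_range f).bddAbove 0) (le_ciSup (Set.finite_range f).bddAbove 1)

lemma iInf_fin2 (f : Fin 2 → ℝ) : (⨅ i, f i) = min (f 0) (f 1) := by
  apply le_antisymm
  · exact le_min (ciInf_le (Set.finite_range f).bddBelow 0) (ciInf_le (Set.finite_range f).bddBelow 1)
  · exact le_ciInf (fun i => by fin_cases i <;> simp [min_le_left, min_le_right])

lemma eig_vals (P : Matrix (Fin 2) (Fin 2) ℝ) (hP : P.IsHermitian) (hPv : P = !![3,1;1,1]) :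
    (⨆ i, hP.eigenvalues i) = 2 + Real.sqrt 2 ∧ (⨅ i, hP.eigenvalues i) = 2 - Real.sqrt 2 := by
  have hdet : P.det = 2 := by rw [hPv]; simp [Matrix.det_fin_two]; norm_num
  have htr : P.trace = 4 := by rw [hPv]; simp [Matrix.trace_fin_two]; norm_num
  have hprod : hP.eigenvalues 0 * hP.eigenvalues 1 = 2 := by
    have := hP.det_eq_prod_eigenvalues
    rw [hdet] at this
    simpa [Fin.prod_univ_two] using this.symm
  have hsum : hP.eigenvalues 0 + hP.eigenvalues 1 = 4 := by
    have hst := hP.spectral_theorem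
    have : P.trace = (Matrix.diagonal (RCLike.ofReal ∘ hP.eigenvalues) : Matrix (Fin 2) (Fin 2) ℝ).trace := by
      conv_lhs => rw [hst]
      rw [Unitary.conjStarAlgAut_apply, Matrix.trace_mul_cycle]
      rw [Unitary.coe_star_mul_self hP.eigenvectorUnitary, Matrix.one_mul]
    rw [htr] at this
    simpa [Matrix.trace_diagonal, Fin.sum_univ_two] using this.symm
  have hs2 : Real.sqrt 2 ^ 2 = 2 := Real.sq_sqrt (by norm_num)
  have hs1 : (1:ℝ) < Real.sqrt 2 := by nlinarith [Real.sqrt_nonneg 2]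
  have hroot : (hP.eigenvalues 0 - (2 + Real.sqrt 2)) * (hP.eigenvalues 0 - (2 - Real.sqrt 2)) = 0 := by
    linear_combination hP.eigenvalues 0 * hsum - hprod - hs2
  rw [iSup_fin2, iInf_fin2]
  rcases mul_eq_zero.1 hroot with h | h
  · have h0 : hP.eigenvalues 0 = 2 + Real.sqrt 2 := by linarith
    have h1 : hP.eigenvalues 1 = 2 - Real.sqrt 2 := by linarith
    rw [h0, h1]
    exact ⟨max_eq_left (by nlinarith), min_eq_right (by nlinarith)⟩
  · have h0 : hP.eigenvalues 0 = 2 - Real.sqrt 2 := by linarith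
    have h1 : hP.eigenvalues 1 = 2 + Real.sqrt 2 := by linarith
    rw [h0, h1]
    exact ⟨max_eq_right (by nlinarith), min_eq_left (by nlinarith)⟩

lemma sqrt_gron {a c t η : ℝ} {V VD : ℝ → ℝ} (ha : 0 < a) (hc : 0 ≤ c) (hη : 0 < η) (ht : 0 ≤ t)
    (hd : ∀ τ ∈ Set.Icc 0 t, HasDerivAt V (VD τ) τ)
    (hVpos : ∀ τ ∈ Set.Icc 0 t, 0 ≤ V τ)
    (hbound : ∀ τ ∈ Set.Icc 0 t, VD τ ≤ -2*a*(V τ) + 2*c*Real.sqrt (V τ)) :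
    Real.sqrt (V t) ≤ Real.sqrt (V 0 + η) * Real.exp (-a*t) + (c/a + Real.sqrt η) := by
  set f : ℝ → ℝ := fun τ => Real.sqrt (V τ + η) with hf_def
  set f' : ℝ → ℝ := fun τ => VD τ / (2 * Real.sqrt (V τ + η)) with hf'_def
  have hpos : ∀ τ ∈ Set.Icc 0 t, 0 < V τ + η := fun τ hτ => by linarith [hVpos τ hτ]
  have hu : ∀ τ ∈ Set.Icc 0 t, HasDerivAt f (f' τ) τ := by
    intro τ hτ
    have h := (Real.hasDerivAt_sqrt (ne_of_gt (hpos τ hτ))).comp τ ((hd τ hτ).add_const η)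
    refine h.congr_deriv ?_
    rw [hf'_def]; field_simp
  have hcont : ContinuousOn f (Set.Icc 0 t) :=
    fun τ hτ => (hu τ hτ).continuousAt.continuousWithinAt
  have hslope : ∀ x ∈ Set.Ico 0 t, ∀ r, f' x < r →
      ∃ᶠ z in nhdsWithin x (Set.Ioi x), (z - x)⁻¹ * (f z - f x) < r := by
    intro x hx r hr
    have H : HasDerivWithinAt f (f' x) (Set.Ioi x) x :=
      (hu x ⟨hx.1, le_of_lt hx.2⟩).hasDerivWithinAt
    rw [hasDerivWithinAt_iff_tendsto_slope] at H
    have hset : Set.Ioi x \ {x} = Set.Ioi x := Set.diff_singleton_eq_self (by simp)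
    rw [hset] at H
    have hev : ∀ᶠ z in nhdsWithin x (Set.Ioi x), slope f x z < r := H.eventually_lt_const hr
    refine hev.frequently.mono ?_
    intro z hz
    rwa [slope_def_field, div_eq_inv_mul] at hz
  have hbnd : ∀ x ∈ Set.Ico 0 t, f' x ≤ (-a) * f x + (c + a * Real.sqrt η) := by
    intro x hx
    have hxI : x ∈ Set.Icc 0 t := ⟨hx.1, le_of_lt hx.2⟩
    have hVx := hVpos x hxI
    have hux : 0 < Real.sqrt (V x + η) := Real.sqrt_pos.2 (hpos x hxI)
    have husq : Real.sqrt (V x + η) ^ 2 = V x + η := Real.sq_sqrt (le_of_lt (hpos x hxI))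
    have hsV : Real.sqrt (V x) ≤ Real.sqrt (V x + η) := Real.sqrt_le_sqrt (by linarith)
    have hsη : Real.sqrt η ≤ Real.sqrt (V x + η) := Real.sqrt_le_sqrt (by linarith)
    have hηsq : Real.sqrt η ^ 2 = η := Real.sq_sqrt (le_of_lt hη)
    have hsVnn : 0 ≤ Real.sqrt (V x) := Real.sqrt_nonneg _
    rw [hf'_def]
    rw [div_le_iff₀ (by positivity)]
    have hfx : f x = Real.sqrt (V x + η) := rfl
    rw [hfx]
    have h1 := hbound x hxI
    have h2 : 2*c*Real.sqrt (V x) ≤ 2*c*Real.sqrt (V x + η) := by nlinarith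
    have hint : a*Real.sqrt η*Real.sqrt η ≤ a*Real.sqrt η*Real.sqrt (V x + η) :=
      mul_le_mul_of_nonneg_left hsη (mul_nonneg ha.le (Real.sqrt_nonneg η))
    nlinarith [h1, h2, husq, hint, hηsq]
  have key := le_gronwallBound_of_liminf_deriv_right_le hcont hslope (le_refl (f 0))
    hbnd t ⟨ht, le_refl t⟩
  rw [gronwallBound_of_K_ne_0 (by linarith : (-a) ≠ 0)] at key
  simp only [sub_zero] at key
  have hsVt : Real.sqrt (V t) ≤ f t := Real.sqrt_le_sqrt (by linarith [hη])
  have he1 : Real.exp (-a * t) ≤ 1 := Real.exp_le_one_iff.2 (by nlinarith)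
  have he0 : 0 < Real.exp (-a * t) := Real.exp_pos _
  have hfin : ((c + a * Real.sqrt η) / (-a)) * (Real.exp (-a*t) - 1) ≤ c/a + Real.sqrt η := by
    have hq : ((c + a * Real.sqrt η) / (-a)) * (Real.exp (-a*t) - 1)
        = ((c + a * Real.sqrt η) * (1 - Real.exp (-a*t))) / a := by
      rw [div_neg, neg_mul, neg_eq_iff_eq_neg, ← neg_div, div_mul_eq_mul_div]
      ring_nf
    rw [hq, div_le_iff₀ ha]
    have hsq : 0 ≤ Real.sqrt η := Real.sqrt_nonneg η
    have hra : (c/a + Real.sqrt η)*a = c + a*Real.sqrt η := by field_simp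
    nlinarith [mul_nonneg (add_nonneg hc (mul_nonneg ha.le hsq)) he0.le]
  calc Real.sqrt (V t) ≤ f t := hsVt
    _ ≤ f 0 * Real.exp (-a*t) + ((c + a * Real.sqrt η) / (-a)) * (Real.exp (-a*t) - 1) := key
    _ ≤ Real.sqrt (V 0 + η) * Real.exp (-a*t) + (c/a + Real.sqrt η) := by
        have : f 0 = Real.sqrt (V 0 + η) := rfl
        rw [this]
        linarith [hfin]


lemma Vpos_aux (A B : ℝ) : 0 ≤ 3*(A*A) + (2*(A*B) + B*B) := by
  nlinarith [sq_nonneg (A+B), sq_nonneg A]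

lemma V_le_aux {s : ℝ} (hs2 : s^2 = 2) (hs1 : 1 < s) (A B : ℝ) :
    3*(A*A) + (2*(A*B) + B*B) ≤ (2+s)*(A^2+B^2) := by
  have hkey : (1+s)*((2+s)*(A^2+B^2) - (3*(A*A) + (2*(A*B) + B*B))) = (A - (1+s)*B)^2 := by
    linear_combination (A^2) * hs2
  nlinarith [hkey, sq_nonneg (A - (1+s)*B)]

lemma V_ge_aux {s : ℝ} (hs2 : s^2 = 2) (hs1 : 1 < s) (A B : ℝ) :
    (2-s)*(A^2+B^2) ≤ 3*(A*A) + (2*(A*B) + B*B) := by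
  have hkey : (s-1)*((3*(A*A) + (2*(A*B) + B*B)) - (2-s)*(A^2+B^2)) = (A + (s-1)*B)^2 := by
    linear_combination (A^2) * hs2
  nlinarith [hkey, sq_nonneg (A + (s-1)*B)]

lemma VD_bound_aux {s σ k W a c A B w0 w1 : ℝ} (hs2 : s^2 = 2) (hs1 : 1 < s) (hs15 : s < 3/2)
    (hσ2 : σ^2 = 2 - s) (hσpos : 0 < σ) (hk : 0 < k) (hW : 0 ≤ W)
    (ha : a*(2+s) = k) (hc : c*σ = (2+s)*W)
    (hwsq : w0^2 + w1^2 ≤ W^2) :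
    -2*k*(A^2+B^2) + 2*((3*A+B)*w0 + (A+B)*w1)
      ≤ -2*a*(3*(A*A) + (2*(A*B) + B*B))
        + 2*c*Real.sqrt (3*(A*A) + (2*(A*B) + B*B)) := by
  have hVnn : 0 ≤ 3*(A*A) + (2*(A*B) + B*B) := Vpos_aux A B
  set r : ℝ := Real.sqrt (3*(A*A) + (2*(A*B) + B*B)) with hr_def
  have hrnn : 0 ≤ r := Real.sqrt_nonneg _
  have hr2 : r^2 = 3*(A*A) + (2*(A*B) + B*B) := Real.sq_sqrt hVnn
  have hapos : 0 < a := by nlinarith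
  have hcnn : 0 ≤ c := by nlinarith
  -- part 1
  have h1 := V_le_aux hs2 hs1 A B
  have hpart1 : -2*k*(A^2+B^2) ≤ -2*a*(3*(A*A) + (2*(A*B) + B*B)) := by
    have hint := mul_le_mul_of_nonneg_left h1 hapos.le
    have h3 : a*((2+s)*(A^2+B^2)) = k*(A^2+B^2) := by rw [← ha]; ring
    linarith
  -- part 2
  have hCS : ((3*A+B)*w0 + (A+B)*w1)^2 ≤ (w0^2 + w1^2) * (10*A^2 + 8*A*B + 2*B^2) := by
    nlinarith [sq_nonneg ((3*A+B)*w1 - (A+B)*w0)]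
  have hQnn : 0 ≤ 10*A^2 + 8*A*B + 2*B^2 := by
    nlinarith [sq_nonneg (A+B), sq_nonneg A, sq_nonneg B]
  have hc1 : ((3*A+B)*w0 + (A+B)*w1)^2 ≤ W^2 * (10*A^2 + 8*A*B + 2*B^2) :=
    le_trans hCS (mul_le_mul_of_nonneg_right hwsq hQnn)
  have h2b : (2-s)*(10*A^2 + 8*A*B + 2*B^2) ≤ (6+4*s)*(3*(A*A) + (2*(A*B) + B*B)) := by
    nlinarith [mul_nonneg (by linarith : (0:ℝ) ≤ 8*s-2) (sq_nonneg (A+B)),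
      mul_nonneg (by linarith : (0:ℝ) ≤ 14*s) (sq_nonneg A),
      mul_nonneg (by linarith : (0:ℝ) ≤ 4-2*s) (sq_nonneg B)]
  have e2 : ((2+s)*W*r)^2 = (6+4*s)*(W^2*(3*(A*A) + (2*(A*B) + B*B))) := by
    rw [mul_pow, mul_pow, hr2]; linear_combination (W^2*(3*(A*A) + (2*(A*B) + B*B)))*hs2
  have c3 : (σ*((3*A+B)*w0 + (A+B)*w1))^2 ≤ ((2+s)*W*r)^2 := by
    rw [mul_pow, hσ2, e2]
    nlinarith [mul_le_mul_of_nonneg_left hc1 (by linarith : (0:ℝ) ≤ 2-s),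
      mul_le_mul_of_nonneg_left h2b (sq_nonneg W)]
  have hcσ : (2+s)*W*r = σ*(c*r) := by rw [← hc]; ring
  have hRnn : 0 ≤ (2+s)*W*r := by positivity
  have hXle : σ*((3*A+B)*w0 + (A+B)*w1) ≤ σ*(c*r) := by
    rw [← hcσ]; nlinarith [c3, hRnn]
  have hXc : (3*A+B)*w0 + (A+B)*w1 ≤ c*r := le_of_mul_le_mul_left hXle hσpos
  linarith

lemma norm_sq_eq2 (x : EuclideanSpace ℝ (Fin 2)) : ‖x‖^2 = (x 0)^2 + (x 1)^2 := by
  rw [EuclideanSpace.norm_eq]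
  rw [Real.sq_sqrt (by positivity)]
  simp [Fin.sum_univ_two, sq_abs]

theorem stmt12 (k : ℝ) (hk : 0 < k)
    (Hstar : Matrix (Fin 2) (Fin 2) ℝ) (hHs : Hstar = !![0, 1; -1, -2])
    (P : Matrix (Fin 2) (Fin 2) ℝ) (hP : P.IsHermitian) (hPd : P.PosDef)
    (hLyap : Hstarᵀ * P + P * Hstar = -((2 : ℝ) • (1 : Matrix (Fin 2) (Fin 2) ℝ)))
    (w : ℝ → EuclideanSpace ℝ (Fin 2)) (W : ℝ) (hw : ∀ t ≥ (0 : ℝ), ‖w t‖ ≤ W)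
    (ε : ℝ → EuclideanSpace ℝ (Fin 2))
    (hε : ∀ t ≥ (0 : ℝ), HasDerivAt ε
      (k • (show EuclideanSpace ℝ (Fin 2) from WithLp.toLp 2 (Hstar.mulVec (ε t))) + w t) t) :
    ∀ t ≥ (0 : ℝ),
      ‖ε t‖ ≤ ((⨆ i, hP.eigenvalues i) / (⨅ i, hP.eigenvalues i)) *
          Real.exp (-(k / (⨆ i, hP.eigenvalues i)) * t) * ‖ε 0‖ +
        (1 / k) * ((⨆ i, hP.eigenvalues i) / (⨅ i, hP.eigenvalues i)) ^ 2 * W := by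
  -- determine P
  have hPv : P = !![3,1;1,1] := by
    subst hHs
    have hsym : P 0 1 = P 1 0 := by
      have := congrFun (congrFun hP 0) 1
      simpa [Matrix.conjTranspose_apply] using this.symm
    have h00 := congrFun (congrFun hLyap 0) 0
    have h01 := congrFun (congrFun hLyap 0) 1
    have h11 := congrFun (congrFun hLyap 1) 1
    norm_num [Matrix.mul_apply, Fin.sum_univ_two, Matrix.one_apply, Matrix.vecHead,
      Matrix.vecTail] at h00 h01 h11
    ext i j
    fin_cases i <;> fin_cases j <;> simp <;> linarith
  obtain ⟨hsup, hinf⟩ := eig_vals P hP hPv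
  rw [hsup, hinf]
  set s : ℝ := Real.sqrt 2 with hs_def
  have hs2 : s ^ 2 = 2 := Real.sq_sqrt (by norm_num)
  have hs0 : 0 ≤ s := Real.sqrt_nonneg 2
  have hs1 : (1:ℝ) < s := by nlinarith
  have hs15 : s < 3/2 := by nlinarith
  have hs43 : 4/3 < s := by nlinarith
  have hW : 0 ≤ W := le_trans (norm_nonneg _) (hw 0 le_rfl)
  -- σ
  set σ : ℝ := Real.sqrt (2 - s) with hσ_def
  have hσ2 : σ ^ 2 = 2 - s := Real.sq_sqrt (by linarith)
  have hσpos : 0 < σ := Real.sqrt_pos.2 (by linarith)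
  -- component derivatives
  have hd0 : ∀ τ ≥ (0:ℝ), HasDerivAt (fun τ => ε τ 0) (k * (ε τ 1) + w τ 0) τ := by
    intro τ hτ
    have h := (EuclideanSpace.proj (0 : Fin 2) : EuclideanSpace ℝ (Fin 2) →L[ℝ] ℝ).hasFDerivAt.comp_hasDerivAt τ (hε τ hτ)
    refine h.congr_deriv ?_
    simp [PiLp.proj_apply, hHs, Matrix.mulVec, dotProduct, Fin.sum_univ_two]
    try tauto
  have hd1 : ∀ τ ≥ (0:ℝ), HasDerivAt (fun τ => ε τ 1) (k * (-(ε τ 0) - 2 * (ε τ 1)) + w τ 1) τ := by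
    intro τ hτ
    have h := (EuclideanSpace.proj (1 : Fin 2) : EuclideanSpace ℝ (Fin 2) →L[ℝ] ℝ).hasFDerivAt.comp_hasDerivAt τ (hε τ hτ)
    refine h.congr_deriv ?_
    simp [PiLp.proj_apply, hHs, Matrix.mulVec, dotProduct, Fin.sum_univ_two]
    try tauto
  intro t ht
  -- Lyapunov function and its derivative
  have hdV : ∀ τ ∈ Set.Icc (0:ℝ) t, HasDerivAt
      (fun τ => 3*(ε τ 0 * ε τ 0) + (2*(ε τ 0 * ε τ 1) + ε τ 1 * ε τ 1))
      (-2*k*((ε τ 0)^2 + (ε τ 1)^2)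
        + 2*((3*(ε τ 0) + ε τ 1)*(w τ 0) + (ε τ 0 + ε τ 1)*(w τ 1))) τ := by
    intro τ hτ
    have h := (((hd0 τ hτ.1).mul (hd0 τ hτ.1)).const_mul (3:ℝ)).add
      ((((hd0 τ hτ.1).mul (hd1 τ hτ.1)).const_mul (2:ℝ)).add ((hd1 τ hτ.1).mul (hd1 τ hτ.1)))
    refine h.congr_deriv ?_
    ring
  have hVpos : ∀ τ : ℝ, (0:ℝ) ≤ 3*(ε τ 0 * ε τ 0) + (2*(ε τ 0 * ε τ 1) + ε τ 1 * ε τ 1) :=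
    fun τ => Vpos_aux _ _
  have hapos : 0 < k/(2+s) := by positivity
  have hcnn : 0 ≤ (2+s)*W/σ := by positivity
  have hbound : ∀ τ ∈ Set.Icc (0:ℝ) t,
      -2*k*((ε τ 0)^2 + (ε τ 1)^2)
        + 2*((3*(ε τ 0) + ε τ 1)*(w τ 0) + (ε τ 0 + ε τ 1)*(w τ 1))
      ≤ -2*(k/(2+s))*(3*(ε τ 0 * ε τ 0) + (2*(ε τ 0 * ε τ 1) + ε τ 1 * ε τ 1))
        + 2*((2+s)*W/σ)*Real.sqrt (3*(ε τ 0 * ε τ 0) + (2*(ε τ 0 * ε τ 1) + ε τ 1 * ε τ 1)) := by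
    intro τ hτ
    have hwsq : (w τ 0)^2 + (w τ 1)^2 ≤ W^2 := by
      have h := hw τ hτ.1
      have hn : ‖w τ‖^2 = (w τ 0)^2 + (w τ 1)^2 := norm_sq_eq2 (w τ)
      nlinarith [norm_nonneg (w τ)]
    exact VD_bound_aux hs2 hs1 hs15 hσ2 hσpos hk hW (div_mul_cancel₀ k (by linarith)) (div_mul_cancel₀ _ (ne_of_gt hσpos)) hwsq
  -- Gronwall for each η > 0
  have hmain : ∀ η > (0:ℝ),
      Real.sqrt (3*(ε t 0 * ε t 0) + (2*(ε t 0 * ε t 1) + ε t 1 * ε t 1))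
        ≤ Real.sqrt (3*(ε 0 0 * ε 0 0) + (2*(ε 0 0 * ε 0 1) + ε 0 1 * ε 0 1) + η)
            * Real.exp (-(k/(2+s))*t)
          + (((2+s)*W/σ)/(k/(2+s)) + Real.sqrt η) := by
    intro η hη
    exact sqrt_gron (V := fun τ => 3*(ε τ 0 * ε τ 0) + (2*(ε τ 0 * ε τ 1) + ε τ 1 * ε τ 1))
      (VD := fun τ => -2*k*((ε τ 0)^2 + (ε τ 1)^2)
        + 2*((3*(ε τ 0) + ε τ 1)*(w τ 0) + (ε τ 0 + ε τ 1)*(w τ 1)))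
      hapos hcnn hη ht hdV (fun τ _ => hVpos τ) hbound
  -- norm vs V
  have hnt : σ * ‖ε t‖ ≤ Real.sqrt (3*(ε t 0 * ε t 0) + (2*(ε t 0 * ε t 1) + ε t 1 * ε t 1)) := by
    have hns : ‖ε t‖^2 = (ε t 0)^2 + (ε t 1)^2 := norm_sq_eq2 (ε t)
    have hsq : (σ * ‖ε t‖)^2 ≤ 3*(ε t 0 * ε t 0) + (2*(ε t 0 * ε t 1) + ε t 1 * ε t 1) := by
      rw [mul_pow, hσ2, hns]
      exact V_ge_aux hs2 hs1 _ _
    calc σ * ‖ε t‖ = Real.sqrt ((σ * ‖ε t‖)^2) := (Real.sqrt_sq (by positivity)).symm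
      _ ≤ _ := Real.sqrt_le_sqrt hsq
  -- pass to the limit η → 0
  set E : ℝ := Real.exp (-(k/(2+s))*t) with hE_def
  have hEpos : 0 < E := Real.exp_pos _
  set V0 : ℝ := 3*(ε 0 0 * ε 0 0) + (2*(ε 0 0 * ε 0 1) + ε 0 1 * ε 0 1) with hV0_def
  have hV0nn : 0 ≤ V0 := hVpos 0
  set g : ℝ → ℝ := fun η =>
    (Real.sqrt (V0 + η) * E + (((2+s)*W/σ)/(k/(2+s)) + Real.sqrt η))/σ with hg_def
  have hlim : ∀ η ∈ Set.Ioi (0:ℝ), ‖ε t‖ ≤ g η := by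
    intro η hη
    rw [hg_def]
    simp only []
    rw [le_div_iff₀ hσpos]
    calc ‖ε t‖ * σ = σ * ‖ε t‖ := by ring
      _ ≤ Real.sqrt (3*(ε t 0 * ε t 0) + (2*(ε t 0 * ε t 1) + ε t 1 * ε t 1)) := hnt
      _ ≤ _ := hmain η hη
  have hgc : ContinuousAt g 0 := by
    apply ContinuousAt.div _ continuousAt_const (ne_of_gt hσpos)
    exact (((Real.continuous_sqrt.comp (continuous_const.add continuous_id)).continuousAt).mul
      continuousAt_const).add (continuousAt_const.add Real.continuous_sqrt.continuousAt)
  have hle0 : ‖ε t‖ ≤ g 0 :=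
    ge_of_tendsto (hgc.tendsto.mono_left nhdsWithin_le_nhds)
      (eventually_nhdsWithin_of_forall hlim)
  have hg0 : g 0 = (Real.sqrt V0 * E + ((2+s)*W/σ)/(k/(2+s)))/σ := by
    rw [hg_def]; simp
  rw [hg0] at hle0
  -- final numeric comparisons
  have h2spos : (0:ℝ) < 2 - s := by linarith
  have hq2s : ((2+s)/(2-s)) * (2-s) = 2+s := div_mul_cancel₀ _ (ne_of_gt h2spos)
  have hq1 : 1 ≤ (2+s)/(2-s) := by rw [le_div_iff₀ h2spos]; linarith
  have hqnn : (0:ℝ) ≤ (2+s)/(2-s) := by linarith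
  have hV0le : V0 ≤ (2+s) * ‖ε 0‖^2 := by
    have hns : ‖ε 0‖^2 = (ε 0 0)^2 + (ε 0 1)^2 := norm_sq_eq2 (ε 0)
    rw [hns, hV0_def]
    exact V_le_aux hs2 hs1 _ _
  have final1 : Real.sqrt V0 * E / σ ≤ ((2+s)/(2-s)) * E * ‖ε 0‖ := by
    have hRnn : 0 ≤ ((2+s)/(2-s)) * σ * ‖ε 0‖ := by positivity
    have hsq2 : V0 ≤ (((2+s)/(2-s)) * σ * ‖ε 0‖)^2 := by
      have he : (((2+s)/(2-s)) * σ * ‖ε 0‖)^2 = ((2+s)/(2-s))^2 * (2-s) * ‖ε 0‖^2 := by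
        rw [mul_pow, mul_pow, hσ2]; try ring
      have e3 : ((2+s)/(2-s))^2*(2-s) = ((2+s)/(2-s))*(2+s) := by
        rw [pow_two, mul_assoc, hq2s]
      rw [he, e3]
      nlinarith [hq1, sq_nonneg ‖ε 0‖, hV0le]
    have hR : Real.sqrt V0 ≤ ((2+s)/(2-s)) * σ * ‖ε 0‖ := by
      calc Real.sqrt V0 ≤ Real.sqrt ((((2+s)/(2-s)) * σ * ‖ε 0‖)^2) := Real.sqrt_le_sqrt hsq2
        _ = ((2+s)/(2-s)) * σ * ‖ε 0‖ := Real.sqrt_sq hRnn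
    rw [div_le_iff₀ hσpos]
    nlinarith [mul_le_mul_of_nonneg_right hR hEpos.le]
  have final2 : (((2+s)*W/σ)/(k/(2+s)))/σ ≤ 1/k * ((2+s)/(2-s))^2 * W := by
    have hca : (((2+s)*W/σ)/(k/(2+s)))/σ = ((2+s)^2*W)/(k*σ^2) := by
      field_simp
      try ring
    have hrhs : 1/k * ((2+s)/(2-s))^2 * W = ((2+s)^2*W)/(k*(2-s)^2) := by
      field_simp
      try ring
    rw [hca, hσ2, hrhs]
    rw [div_le_div_iff₀ (by positivity) (by positivity)]
    have h2s2 : (2-s)^2 ≤ 2-s := by nlinarith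
    nlinarith [mul_le_mul_of_nonneg_left h2s2
      (mul_nonneg (mul_nonneg (sq_nonneg (2+s)) hW) hk.le)]
  have hsplit : (Real.sqrt V0 * E + ((2+s)*W/σ)/(k/(2+s)))/σ
      = Real.sqrt V0 * E / σ + (((2+s)*W/σ)/(k/(2+s)))/σ := add_div _ _ _
  rw [hsplit] at hle0
  calc ‖ε t‖ ≤ Real.sqrt V0 * E / σ + (((2+s)*W/σ)/(k/(2+s)))/σ := hle0
    _ ≤ ((2+s)/(2-s)) * E * ‖ε 0‖ + 1/k * ((2+s)/(2-s))^2 * W := add_le_add final1 final2
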